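/- For any computably enumerable set S of pairs (x, n) such that membership of (x,n) in S implies K(x) > n, the set of values n appearing in S is bounded above. -/

import Mathlib

/-- Programs and outputs are finite bit strings. -/
abbrev Str := List Bool

/-- A computer is a partial computable function from bit strings to bit strings.
A universal computer can simulate any partial computable function via a fixed prefix. -/
def Univ (U : Str →. Str) : Prop :=
  Partrec U ∧ ∀ F : Str →. Str, Partrec F → ∃ e : Str, ∀ p : Str, U (e ++ p) = F p

/-- A program `p` is elegant (for `U`) if it halts and no strictly shorter program
produces the same output. -/
def Elegant (U : Str →. Str) (p : Str) : Prop :=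
  ∃ x : Str, x ∈ U p ∧ ∀ q : Str, q.length < p.length → x ∉ U q

/-- Kolmogorov complexity of `x` relative to `U`: the length of a shortest program for `x`. -/
noncomputable def Kc (U : Str →. Str) (x : Str) : ℕ :=
  sInf { n : ℕ | ∃ p : Str, p.length = n ∧ x ∈ U p }

/-- The domain of `U` is prefix-free. -/
def PrefixFreeDom (U : Str →. Str) : Prop :=
  ∀ p q : Str, (U p).Dom → (U q).Dom → p <+: q → p = q

/-- A universal prefix-free machine. -/
def UnivPF (U : Str →. Str) : Prop :=
  Partrec U ∧ PrefixFreeDom U ∧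
    ∀ F : Str →. Str, Partrec F → PrefixFreeDom F →
      ∃ e : Str, ∀ p : Str, U (e ++ p) = F p

open Classical in
/-- The halting probability `Ω = Σ_{U(p)↓} 2^(-|p|)`. -/
noncomputable def Omega (U : Str →. Str) : ℝ :=
  ∑' p : Str, if (U p).Dom then ((1 : ℝ) / 2) ^ p.length else 0

/-- The `n`-th bit (0-indexed) of the binary expansion of a real `α`. -/
noncomputable def nthBit (α : ℝ) (n : ℕ) : Bool :=
  decide (⌊α * 2 ^ (n + 1)⌋ % 2 = 1)

/-- The string of the first `n` binary digits of `α`. -/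
noncomputable def bitsOf (α : ℝ) (n : ℕ) : Str :=
  (List.range n).map (nthBit α)

/-- An injective encoding of a pair (string, number) as a bit string,
used to express the sentence `K(x) > n`. -/
def encPair (x : Str) (n : ℕ) : Str :=
  (x.flatMap fun b => [b, b]) ++ [true, false] ++ List.replicate n true

/-- An injective encoding of the sentence `the i-th bit of Ω is b`. -/
def encBit (i : ℕ) (b : Bool) : Str :=
  List.replicate i true ++ [false, b]

/-- A set of pairs is computably enumerable. -/
def CE (S : Set (Str × ℕ)) : Prop :=
  ∃ f : ℕ → Option (Str × ℕ), Computable f ∧ S = { a | ∃ k, f k = some a }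

/-- A set of strings is computably enumerable. -/
def CEStr (S : Set Str) : Prop :=
  ∃ f : ℕ → Option Str, Computable f ∧ S = { a | ∃ k, f k = some a }

/-- Abstract Chaitin incompleteness: if `S` is a c.e. set of pairs `(x, n)` such that
`(x, n) ∈ S` implies `K(x) > n`, then the values `n` occurring in `S` are bounded. -/
theorem stmt7' (U : List Bool →. List Bool)
    (hU : Partrec U ∧ ∀ F : List Bool →. List Bool, Partrec F → ∃ e : List Bool, ∀ p : List Bool, U (e ++ p) = F p)
    (S : Set (List Bool × ℕ))
    (hS : ∃ f : ℕ → Option (List Bool × ℕ), Computable f ∧ S = { a | ∃ k, f k = some a })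
    (hsound : ∀ (x : List Bool) (n : ℕ), (x, n) ∈ S →
      n < sInf { m : ℕ | ∃ p : List Bool, p.length = m ∧ x ∈ U p }) :
    ∃ N : ℕ, ∀ (x : List Bool) (n : ℕ), (x, n) ∈ S → n ≤ N := by
  obtain ⟨f, hf, rfl⟩ := hS
  -- the search function
  set g : List Bool → ℕ → Option (List Bool) := fun p k =>
    (f k).bind (fun a => if 2 * p.length ≤ a.2 then some a.1 else none) with hg_def
  have hg : Computable₂ g := by
    apply Computable.option_bind (hf.comp Computable.snd)
    apply Computable₂.mk
    apply Primrec.to_comp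
    exact Primrec.ite
      (Primrec.nat_le.comp
        (Primrec.nat_mul.comp (Primrec.const 2)
          (Primrec.list_length.comp (Primrec.fst.comp Primrec.fst)))
        (Primrec.snd.comp Primrec.snd))
      (Primrec.option_some.comp (Primrec.fst.comp Primrec.snd))
      (Primrec.const none)
  have hF : Partrec (fun p => Nat.rfindOpt (g p)) := Partrec.rfindOpt hg
  obtain ⟨e, he⟩ := hU.2 _ hF
  refine ⟨2 * e.length + 1, fun x n hxn => ?_⟩
  by_contra hn
  push_neg at hn
  -- use p of length n/2
  set m := n / 2 with hm
  have hme : e.length + 1 ≤ m := by omega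
  set p : List Bool := List.replicate m true with hp
  have hplen : p.length = m := List.length_replicate
  -- the search succeeds
  obtain ⟨k, hk⟩ := hxn
  have hdom : (Nat.rfindOpt (g p)).Dom := by
    apply Nat.rfindOpt_dom.2
    refine ⟨k, x, ?_⟩
    simp only [hg_def, hk, Option.mem_def, Option.bind_some, hplen]
    rw [if_pos (by omega)]
  set x' := (Nat.rfindOpt (g p)).get hdom with hx'
  have hmem : x' ∈ Nat.rfindOpt (g p) := Part.get_mem hdom
  obtain ⟨k', hk'⟩ := Nat.rfindOpt_spec hmem
  -- decode hk'
  simp only [hg_def, Option.mem_def] at hk'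
  obtain ⟨a, ha, ha2⟩ := Option.bind_eq_some_iff.1 hk'
  have hcond : 2 * p.length ≤ a.2 := by
    by_contra hc
    rw [if_neg hc] at ha2; exact nomatch ha2
  rw [if_pos hcond] at ha2
  have hax : a.1 = x' := Option.some.inj ha2
  -- a ∈ S
  have haS : (a.1, a.2) ∈ { a | ∃ k, f k = some a } := ⟨k', by rwa [Prod.mk.eta]⟩
  -- x' ∈ U (e ++ p)
  have hxU : x' ∈ U (e ++ p) := by
    rw [he p]; exact hmem
  -- Kc bound
  have hKle : sInf { m : ℕ | ∃ q : List Bool, q.length = m ∧ x' ∈ U q } ≤ e.length + p.length :=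
    Nat.sInf_le ⟨e ++ p, by simp, hxU⟩
  have := hsound a.1 a.2 haS
  rw [hax] at this
  rw [hplen] at hcond hKle
  omega


theorem stmt7 (U : Str →. Str) (hU : Univ U) (S : Set (Str × ℕ)) (hS : CE S)
    (hsound : ∀ (x : Str) (n : ℕ), (x, n) ∈ S → n < Kc U x) :
    ∃ N : ℕ, ∀ (x : Str) (n : ℕ), (x, n) ∈ S → n ≤ N :=
  stmt7' U hU S hS hsound
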